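/- Let ρ > 0, ε > 0, let X be a real symmetric positive semidefinite n×n matrix, set ỹ := (1/ρ)(𝒜X − b), suppose y_t = 0 with f(y_t) = 0 and f̂_t(ỹ) = ⟨−𝒜*ỹ, X⟩ + ⟨b, ỹ⟩, and suppose the proximal subproblem gap Δ̃_t := f(y_t) − ( f̂_t(ỹ) + (ρ/2)‖ỹ − y_t‖² ) satisfies Δ̃_t ≤ ε. Then ‖𝒜X − b‖ ≤ √(2ρε); i.e., X is a positive semidefinite matrix approximately satisfying the given affine constraints to accuracy √(2ρε). -/

import Mathlib

open Matrix
open scoped RealInnerProductSpace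

/-- Frobenius (trace) inner product of real matrices. -/
def frob {n : ℕ} (A B : Matrix (Fin n) (Fin n) ℝ) : ℝ := (Aᵀ * B).trace

/-- The linear operator `𝒜 : Sym(n,ℝ) → ℝ^m`, `(𝒜X)_i = ⟨A_i, X⟩`. -/
noncomputable def opA {n m : ℕ} (A : Fin m → Matrix (Fin n) (Fin n) ℝ)
    (X : Matrix (Fin n) (Fin n) ℝ) : EuclideanSpace ℝ (Fin m) :=
  (WithLp.equiv 2 (Fin m → ℝ)).symm (fun i => frob (A i) X)

/-- if `X` is positive semidefinite, `ỹ := (1/ρ)(𝒜X − b)`, `y_t = 0` with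
`f(y_t) = 0` and `f̂_t(ỹ) = ⟨−𝒜*ỹ, X⟩ + ⟨b, ỹ⟩`, and the proximal subproblem gap
`Δ̃_t = f(y_t) − (f̂_t(ỹ) + (ρ/2)‖ỹ − y_t‖²)` satisfies `Δ̃_t ≤ ε`, then
`‖𝒜X − b‖ ≤ √(2ρε)`: `X` is a PSD matrix approximately satisfying the constraints. -/
theorem small_gap_gives_approx_feasible_psd {n m : ℕ} (hn : 0 < n) (hm : 0 < m)
    (ρ ε : ℝ) (hρ : 0 < ρ) (hε : 0 < ε)
    (A : Fin m → Matrix (Fin n) (Fin n) ℝ) (hA : ∀ i, (A i).IsSymm)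
    (b : EuclideanSpace ℝ (Fin m))
    (X : Matrix (Fin n) (Fin n) ℝ) (hX : X.PosSemidef)
    (ytilde : EuclideanSpace ℝ (Fin m)) (hytilde : ytilde = (1 / ρ) • (opA A X - b))
    (f fhatt : EuclideanSpace ℝ (Fin m) → ℝ)
    (yt : EuclideanSpace ℝ (Fin m)) (hyt : yt = 0) (hfyt : f yt = 0)
    (hfhatt : fhatt ytilde = frob (-(∑ i, ytilde i • A i)) X + ⟪b, ytilde⟫)
    (hgap : f yt - (fhatt ytilde + ρ / 2 * ‖ytilde - yt‖ ^ 2) ≤ ε) :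
    ‖opA A X - b‖ ≤ Real.sqrt (2 * ρ * ε) := by
  subst hyt
  set v := opA A X - b with hv
  have h2 : frob (-(∑ i, ytilde i • A i)) X = -⟪ytilde, opA A X⟫ := by
    simp [frob, Matrix.transpose_sum, Matrix.sum_mul, Matrix.trace_sum,
      PiLp.inner_apply, RCLike.inner_apply, opA,
      Matrix.smul_mul, Finset.sum_neg_distrib]
    exact Finset.sum_congr rfl (fun _ _ => mul_comm _ _)
  have hiv : ⟪ytilde, v⟫ = (1 / ρ) * ‖v‖ ^ 2 := by
    rw [hytilde, real_inner_smul_left, real_inner_self_eq_norm_sq]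
  have hfh : fhatt ytilde = -((1 / ρ) * ‖v‖ ^ 2) := by
    have hsplit : ⟪ytilde, opA A X⟫ - ⟪ytilde, b⟫ = (1 / ρ) * ‖v‖ ^ 2 := by
      rw [← inner_sub_right]; exact hiv
    have hc : ⟪b, ytilde⟫ = ⟪ytilde, b⟫ := (real_inner_comm b ytilde).symm
    rw [hfhatt, h2, hc]
    linarith [hsplit]
  have hnorm : ‖ytilde‖ ^ 2 = (1 / ρ) ^ 2 * ‖v‖ ^ 2 := by
    rw [hytilde, norm_smul, mul_pow]
    congr 1
    rw [Real.norm_eq_abs, abs_of_pos (by positivity)]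
  have hsq : ‖v‖ ^ 2 ≤ 2 * ρ * ε := by
    rw [hfyt, hfh, sub_zero, hnorm] at hgap
    have hρ' : ρ ≠ 0 := ne_of_gt hρ
    have heq : 0 - (-(1 / ρ * ‖v‖ ^ 2) + ρ / 2 * ((1 / ρ) ^ 2 * ‖v‖ ^ 2))
        = 1 / (2 * ρ) * ‖v‖ ^ 2 := by
      field_simp
      ring
    rw [heq] at hgap
    have h1 : (2 * ρ) * (1 / (2 * ρ) * ‖v‖ ^ 2) = ‖v‖ ^ 2 := by field_simp
    nlinarith [mul_le_mul_of_nonneg_left hgap (by positivity : (0:ℝ) ≤ 2 * ρ), h1]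
  have h0 : (0:ℝ) ≤ ‖v‖ := norm_nonneg v
  rw [← Real.sqrt_sq h0]
  exact Real.sqrt_le_sqrt hsq
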